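/- (Proposition 1) Let φ: ℝ^d → ℝ be L-smooth, let K = ∫_{ℝ^d} e^{−φ(x)} dx and Z = ∑_{z∈ℤ^d} e^{−φ(z)}, and assume 0 < K < ∞ and 0 < Z < ∞. Define the proposal density π(x) = e^{−φ(x)}/K and the target density π̄(x) = (1/Z) · 2e^{−φ([x])} / (1 + exp(2⟨x − [x], ∇φ([x])⟩)), where [x] is the coordinate-wise rounding of x to the nearest integer point. Then for every x ∈ ℝ^d, π(x) ≥ (Z/K) · exp(−dL/8) · π̄(x), and (Z/K) · exp(−dL/8) > 0. -/

import Mathlib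

open Real MeasureTheory
open scoped RealInnerProductSpace

/-- Coordinate-wise rounding of a vector in `ℝ^d` to the nearest integer point. -/
noncomputable def roundVec {d : ℕ} (x : EuclideanSpace ℝ (Fin d)) :
    EuclideanSpace ℝ (Fin d) :=
  WithLp.toLp 2 (fun i => (round (x i) : ℝ))

/-- Descent lemma for L-smooth functions. -/
lemma descent_lemma {d : ℕ} {L : ℝ} {φ : EuclideanSpace ℝ (Fin d) → ℝ}
    (hdiff : Differentiable ℝ φ)
    (hLip : ∀ x y : EuclideanSpace ℝ (Fin d),
      ‖gradient φ x - gradient φ y‖ ≤ L * ‖x - y‖)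
    (y u : EuclideanSpace ℝ (Fin d)) :
    φ (y + u) ≤ φ y + ⟪gradient φ y, u⟫ + L / 2 * ‖u‖ ^ 2 := by
  set g := gradient φ y with hg
  have hder : ∀ t : ℝ, HasDerivAt (fun t : ℝ => φ (y + t • u))
      ⟪gradient φ (y + t • u), u⟫ t := by
    intro t
    have h1 : HasDerivAt (fun t : ℝ => y + t • u) u t := by
      simpa using ((hasDerivAt_id t).smul_const u).const_add y
    have h2 := (hdiff (y + t • u)).hasGradientAt.hasFDerivAt
    have := h2.comp_hasDerivAt t h1
    rw [InnerProductSpace.toDual_apply_apply] at this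
    exact this
  set F : ℝ → ℝ := fun t => φ (y + t • u) - t * ⟪g, u⟫ - L / 2 * ‖u‖ ^ 2 * t ^ 2 with hF
  have hFder : ∀ t : ℝ, HasDerivAt F
      (⟪gradient φ (y + t • u), u⟫ - ⟪g, u⟫ - L * ‖u‖ ^ 2 * t) t := by
    intro t
    have h3 : HasDerivAt (fun t : ℝ => t * ⟪g, u⟫) ⟪g, u⟫ t := by
      simpa using (hasDerivAt_id t).mul_const ⟪g, u⟫
    have h4 : HasDerivAt (fun t : ℝ => L / 2 * ‖u‖ ^ 2 * t ^ 2)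
        (L / 2 * ‖u‖ ^ 2 * (2 * t)) t := by
      simpa using (hasDerivAt_pow 2 t).const_mul (L / 2 * ‖u‖ ^ 2)
    have := ((hder t).sub h3).sub h4
    rw [show L * ‖u‖ ^ 2 * t = L / 2 * ‖u‖ ^ 2 * (2 * t) by ring]
    exact this
  have hanti : AntitoneOn F (Set.Icc 0 1) := by
    apply antitoneOn_of_deriv_nonpos (convex_Icc 0 1)
    · exact fun t _ => ((hFder t).continuousAt).continuousWithinAt
    · exact fun t _ => ((hFder t).differentiableAt).differentiableWithinAt
    · intro t ht
      rw [interior_Icc] at ht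
      rw [(hFder t).deriv]
      have h5 : ⟪gradient φ (y + t • u) - g, u⟫ ≤ ‖gradient φ (y + t • u) - g‖ * ‖u‖ :=
        real_inner_le_norm _ _
      have h6 : ‖gradient φ (y + t • u) - g‖ ≤ L * (t * ‖u‖) := by
        have := hLip (y + t • u) y
        simpa [norm_smul, abs_of_pos ht.1, mul_assoc] using this
      have h7 : ‖gradient φ (y + t • u) - g‖ * ‖u‖ ≤ L * (t * ‖u‖) * ‖u‖ :=
        mul_le_mul_of_nonneg_right h6 (norm_nonneg u)
      rw [inner_sub_left] at h5
      nlinarith [sq_nonneg ‖u‖]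
  have hle : F 1 ≤ F 0 := hanti (Set.mem_Icc.2 ⟨le_refl 0, zero_le_one⟩)
    (Set.mem_Icc.2 ⟨zero_le_one, le_refl 1⟩) zero_le_one
  simp only [hF, one_smul, zero_smul, add_zero, one_pow, one_mul, zero_pow, mul_zero,
    sub_zero, zero_mul] at hle
  linarith

theorem stmt1 {d : ℕ} (hd : 1 ≤ d) (L : ℝ) (φ : EuclideanSpace ℝ (Fin d) → ℝ)
    (hdiff : Differentiable ℝ φ)
    (hLip : ∀ x y : EuclideanSpace ℝ (Fin d),
      ‖gradient φ x - gradient φ y‖ ≤ L * ‖x - y‖)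
    (K Z : ℝ)
    (hK : K = ∫ x : EuclideanSpace ℝ (Fin d), Real.exp (-φ x))
    (hKpos : 0 < K)
    (hZ : Z = ∑' z : Fin d → ℤ, Real.exp (-φ (WithLp.toLp 2 (fun i => (z i : ℝ)))))
    (hZpos : 0 < Z)
    (p pb : EuclideanSpace ℝ (Fin d) → ℝ)
    (hp : ∀ x, p x = Real.exp (-φ x) / K)
    (hpb : ∀ x, pb x = (1 / Z) * (2 * Real.exp (-φ (roundVec x)) /
      (1 + Real.exp (2 * ⟪x - roundVec x, gradient φ (roundVec x)⟫)))) :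
    (∀ x, p x ≥ (Z / K) * Real.exp (-(d * L) / 8) * pb x) ∧
      0 < (Z / K) * Real.exp (-(d * L) / 8) := by
  have hL : 0 ≤ L := by
    have i0 : Fin d := ⟨0, hd⟩
    have h := hLip (EuclideanSpace.single i0 (1 : ℝ)) 0
    have h1 : ‖(EuclideanSpace.single i0 (1 : ℝ)) - 0‖ = 1 := by
      simp [EuclideanSpace.norm_single]
    rw [h1, mul_one] at h
    exact le_trans (norm_nonneg _) h
  refine ⟨?_, by positivity⟩
  intro x
  set r := roundVec x with hr
  set u : EuclideanSpace ℝ (Fin d) := x - r with hu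
  set g := gradient φ r with hgd
  set s : ℝ := ⟪x - roundVec x, gradient φ (roundVec x)⟫ with hs
  -- norm bound on u
  have hnorm : ‖u‖ ^ 2 ≤ (d : ℝ) / 4 := by
    have h1 : ‖u‖ ^ 2 = ∑ i, ‖u i‖ ^ 2 := by
      rw [EuclideanSpace.norm_eq, Real.sq_sqrt (by positivity)]
    rw [h1]
    have h2 : ∀ i : Fin d, ‖u i‖ ^ 2 ≤ 1 / 4 := by
      intro i
      have : u i = x i - (round (x i) : ℝ) := by
        simp [hu, hr, roundVec]
      rw [this, Real.norm_eq_abs]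
      have := abs_sub_round (x i)
      nlinarith [abs_nonneg (x i - (round (x i) : ℝ))]
    calc ∑ i, ‖u i‖ ^ 2 ≤ ∑ _i : Fin d, (1 / 4 : ℝ) := Finset.sum_le_sum fun i _ => h2 i
      _ = (d : ℝ) / 4 := by simp; ring
  -- descent
  have hdesc : φ x ≤ φ r + s + (d : ℝ) * L / 8 := by
    have h := descent_lemma hdiff hLip r u
    have hru : r + u = x := by simp [hu]
    rw [hru] at h
    have hinner : ⟪g, u⟫ = s := by rw [hs, real_inner_comm]
    have : L / 2 * ‖u‖ ^ 2 ≤ (d : ℝ) * L / 8 := by nlinarith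
    rw [hinner] at h
    linarith
  rw [hp, hpb]
  have hZne : Z ≠ 0 := ne_of_gt hZpos
  set A := Real.exp (-((d : ℝ) * L) / 8) with hA
  set E := 1 + Real.exp (2 * s) with hE
  have hEpos : 0 < E := by positivity
  have key : A * (2 * Real.exp (-φ r)) ≤ Real.exp (-φ x) * E := by
    have amgm : 2 * Real.exp (-φ r) ≤ Real.exp (-φ r - s) * E := by
      have h1 : Real.exp (-φ r - s) * E = Real.exp (-φ r - s) + Real.exp (-φ r + s) := by
        rw [hE, mul_add, mul_one, ← Real.exp_add,
          show -φ r - s + 2 * s = -φ r + s from by ring]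
      rw [h1]
      have h2 : Real.exp (-φ r - s) + Real.exp (-φ r + s) =
          Real.exp (-φ r) * (Real.exp (-s) + Real.exp s) := by
        rw [mul_add, ← Real.exp_add, ← Real.exp_add,
          show -φ r - s = -φ r + -s from by ring]
      rw [h2]
      have h3 : 2 ≤ Real.exp (-s) + Real.exp s := by
        have hmul : Real.exp s * Real.exp (-s) = 1 := by
          rw [← Real.exp_add]; simp
        nlinarith [sq_nonneg (Real.exp s - 1), Real.exp_pos s, Real.exp_pos (-s), hmul]
      nlinarith [Real.exp_pos (-φ r)]
    have h4 : A * Real.exp (-φ r - s) ≤ Real.exp (-φ x) := by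
      rw [hA, ← Real.exp_add]
      apply Real.exp_le_exp.2
      linarith
    calc A * (2 * Real.exp (-φ r)) ≤ A * (Real.exp (-φ r - s) * E) := by
          apply mul_le_mul_of_nonneg_left amgm (le_of_lt (Real.exp_pos _))
      _ = (A * Real.exp (-φ r - s)) * E := by ring
      _ ≤ Real.exp (-φ x) * E := mul_le_mul_of_nonneg_right h4 (le_of_lt hEpos)
  rw [ge_iff_le]
  have hrhs : Z / K * A * (1 / Z * (2 * Real.exp (-φ r) / E)) =
      A * (2 * Real.exp (-φ r)) / (K * E) := by
    field_simp
  rw [hrhs, div_le_div_iff₀ (by positivity) hKpos]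
  calc A * (2 * Real.exp (-φ r)) * K ≤ (Real.exp (-φ x) * E) * K :=
        mul_le_mul_of_nonneg_right key (le_of_lt hKpos)
    _ = Real.exp (-φ x) * (K * E) := by ring
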